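/- Let 0 < λ < μ and extend D to complex s by the same polynomial formula. Then for s ∈ ℂ one has Im(D(s)) = 0 if and only if Im(s) = 0 or Re(s) = (ζ⁻+ζ⁺)/2; moreover, for every s ∈ ℂ with Re(s) = (ζ⁻+ζ⁺)/2, the value D(s) is a real number and D(s) < 0. -/

import Mathlib

noncomputable section

/-- The complex extension of the quadratic discriminant `D(s)` of the symmetric SQF model. -/
def DqC (lam mu : ℝ) (s : ℂ) : ℂ :=
  ((mu : ℂ) ^ 2 - (lam : ℂ) * mu / 2 + ((mu : ℂ) - lam) * s) ^ 2 +
    2 * (lam : ℂ) * mu * s * ((mu : ℂ) + s)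

/-- The ramification point `ζ⁻`. -/
def zetaMinus (lam mu : ℝ) : ℝ :=
  -mu * (Real.sqrt mu + Real.sqrt (lam / 2)) ^ 2 /
    (lam / 2 + (Real.sqrt mu + Real.sqrt (lam / 2)) ^ 2)

/-- The ramification point `ζ⁺`. -/
def zetaPlus (lam mu : ℝ) : ℝ :=
  -mu * (Real.sqrt mu - Real.sqrt (lam / 2)) ^ 2 /
    (lam / 2 + (Real.sqrt mu - Real.sqrt (lam / 2)) ^ 2)

lemma sum_zeta (lam mu : ℝ) (hlam : 0 < lam) (hmu : lam < mu) :
    (mu ^ 2 + lam ^ 2) * (zetaMinus lam mu + zetaPlus lam mu)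
      = -(mu * (2 * mu ^ 2 - lam * mu + lam ^ 2)) := by
  obtain ⟨u, hu0, hu⟩ : ∃ u, 0 ≤ u ∧ u ^ 2 = mu :=
    ⟨Real.sqrt mu, Real.sqrt_nonneg _, Real.sq_sqrt (by linarith)⟩
  obtain ⟨v, hv0, hv⟩ : ∃ v, 0 ≤ v ∧ v ^ 2 = lam / 2 :=
    ⟨Real.sqrt (lam / 2), Real.sqrt_nonneg _, Real.sq_sqrt (by linarith)⟩
  subst hu
  have hlv : lam = 2 * v ^ 2 := by linarith
  subst hlv
  unfold zetaMinus zetaPlus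
  rw [show (2 * v ^ 2 / 2) = v ^ 2 by ring, Real.sqrt_sq hu0, Real.sqrt_sq hv0]
  have hvu : v < u := by nlinarith
  have h1 : 2 * v ^ 2 / 2 + (u + v) ^ 2 > 0 := by positivity
  have h2 : 2 * v ^ 2 / 2 + (u - v) ^ 2 > 0 := by nlinarith
  have d1 : u * v * 2 + u ^ 2 + v ^ 2 * 2 ≠ 0 := by nlinarith
  have d2 : -(u * v * 2) + u ^ 2 + v ^ 2 * 2 ≠ 0 := by nlinarith
  rw [show v ^ 2 + (u + v) ^ 2 = u * v * 2 + u ^ 2 + v ^ 2 * 2 by ring,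
      show v ^ 2 + (u - v) ^ 2 = -(u * v * 2) + u ^ 2 + v ^ 2 * 2 by ring]
  rw [div_add_div _ _ d1 d2, mul_div_assoc', div_eq_iff (mul_ne_zero d1 d2)]
  ring

theorem stmt_1 (lam mu : ℝ) (hlam : 0 < lam) (hmu : lam < mu) :
    (∀ s : ℂ, (DqC lam mu s).im = 0 ↔
      s.im = 0 ∨ s.re = (zetaMinus lam mu + zetaPlus lam mu) / 2) ∧
    (∀ s : ℂ, s.re = (zetaMinus lam mu + zetaPlus lam mu) / 2 →
      (DqC lam mu s).im = 0 ∧ (DqC lam mu s).re < 0) := by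
  have hmu0 : 0 < mu := hlam.trans hmu
  set a : ℝ := mu ^ 2 + lam ^ 2 with ha
  set b : ℝ := mu * (2 * mu ^ 2 - lam * mu + lam ^ 2) with hb
  set c : ℝ := (mu ^ 2 - lam * mu / 2) ^ 2 with hc
  set m : ℝ := (zetaMinus lam mu + zetaPlus lam mu) / 2 with hm
  have ha0 : 0 < a := by positivity
  have hsum : 2 * a * m = -b := by
    have h1 : 2 * a * m = a * (zetaMinus lam mu + zetaPlus lam mu) := by rw [hm]; ring
    rw [h1, ha, hb]
    exact sum_zeta lam mu hlam hmu
  have hD : ∀ s : ℂ, DqC lam mu s = (a : ℂ) * s ^ 2 + (b : ℂ) * s + (c : ℂ) := by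
    intro s
    unfold DqC
    rw [ha, hb, hc]
    push_cast
    ring
  have him : ∀ s : ℂ, (DqC lam mu s).im = s.im * (2 * a * s.re + b) := by
    intro s
    rw [hD s]
    simp [Complex.add_im, Complex.mul_im, Complex.mul_re, sq]
    ring
  have hre : ∀ s : ℂ, (DqC lam mu s).re = a * (s.re ^ 2 - s.im ^ 2) + b * s.re + c := by
    intro s
    rw [hD s]
    simp [Complex.add_re, Complex.mul_im, Complex.mul_re, sq]
  have hdisc : 4 * a * c - b ^ 2 = -(2 * lam ^ 3 * mu ^ 3) := by
    rw [ha, hb, hc]; ring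
  have hquad : 4 * a * (a * m ^ 2 + b * m + c) = 4 * a * c - b ^ 2 := by
    have : 4 * a * (a * m ^ 2 + b * m + c)
        = (2 * a * m) ^ 2 + 2 * b * (2 * a * m) + 4 * a * c := by ring
    rw [this, hsum]; ring
  have hneg : a * m ^ 2 + b * m + c < 0 := by nlinarith [hquad, hdisc, ha0, mul_pos (pow_pos hlam 3) (pow_pos hmu0 3)]
  constructor
  · intro s
    rw [him s, mul_eq_zero]
    constructor
    · rintro (h | h)
      · exact Or.inl h
      · right
        have h2 : (2 * a) * s.re = (2 * a) * m := by linarith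
        exact mul_left_cancel₀ (by positivity) h2
    · rintro (h | h)
      · exact Or.inl h
      · right; rw [h]; linarith
  · intro s hs
    refine ⟨?_, ?_⟩
    · rw [him s, hs]
      have : 2 * a * m + b = 0 := by linarith
      rw [this, mul_zero]
    · rw [hre s, hs]
      nlinarith [hneg, mul_nonneg ha0.le (sq_nonneg s.im)]
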